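/- Let R be a number ring such that N(𝔭²) ≤ N(𝔭)² for every maximal ideal 𝔭 of R. Then R is a Dedekind domain. -/

import Mathlib

set_option maxHeartbeats 1000000
set_option synthInstance.maxHeartbeats 400000

open Module Submodule Polynomial

section Aux

/-- Strip powers of `X`: from an integer relation for a nonzero element of a domain, get one
with nonzero constant coefficient. -/
private lemma aux_strip {A : Type*} [CommRing A] [IsDomain A] (x : A) (hx : x ≠ 0) :
    ∀ (n : ℕ) (p : ℤ[X]), p.natDegree ≤ n → p ≠ 0 → aeval x p = 0 →
      ∃ q : ℤ[X], q.coeff 0 ≠ 0 ∧ aeval x q = 0 := by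
  intro n
  induction n with
  | zero =>
    intro p hd hp h0
    refine ⟨p, fun hc => hp ?_, h0⟩
    rw [Polynomial.eq_C_of_natDegree_le_zero hd, hc, map_zero]
  | succ n ih =>
    intro p hd hp h0
    by_cases hc : p.coeff 0 ≠ 0
    · exact ⟨p, hc, h0⟩
    push_neg at hc
    have hX : p = p.divX * X := by
      conv_lhs => rw [← Polynomial.divX_mul_X_add p]
      rw [hc, map_zero, add_zero]
    have hdvx : p.divX ≠ 0 := fun h => hp (by rw [hX, h, zero_mul])
    have h0' : aeval x p.divX * x = 0 := by
      have : aeval x (p.divX * X) = 0 := by rw [← hX]; exact h0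
      simpa using this
    rcases mul_eq_zero.mp h0' with h' | h'
    · exact ih p.divX
        (by have := Polynomial.natDegree_divX_eq_natDegree_tsub_one (p := p); omega) hdvx h'
    · exact absurd h' hx

/-- The quotient of a finite free ℤ-module by `m•` is finite of cardinality at most
`|m| ^ rank`. -/
private lemma aux_quot_smul_card {M : Type*} [AddCommGroup M] [Module ℤ M] [Module.Finite ℤ M]
    [Module.Free ℤ M] (m : ℤ) (hm : m ≠ 0) :
    Finite (M ⧸ LinearMap.range (LinearMap.lsmul ℤ M m)) ∧
      Nat.card (M ⧸ LinearMap.range (LinearMap.lsmul ℤ M m)) ≤ m.natAbs ^ (finrank ℤ M) := by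
  classical
  set N : Submodule ℤ M := LinearMap.range (LinearMap.lsmul ℤ M m) with hN
  let b := Module.Free.chooseBasis ℤ M
  set ι := Module.Free.ChooseBasisIndex ℤ M
  haveI : NeZero m.natAbs := ⟨Int.natAbs_ne_zero.mpr hm⟩
  let φ : (ι → ℤ) →ₗ[ℤ] M := b.equivFun.symm.toLinearMap
  let g : (ι → ZMod m.natAbs) → M ⧸ N := fun c => Submodule.mkQ N (φ (fun i => ((c i).val : ℤ)))
  have hsurj : Function.Surjective g := by
    intro y
    obtain ⟨x, rfl⟩ := Submodule.mkQ_surjective N y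
    set a : ι → ℤ := fun i => b.repr x i with ha
    refine ⟨fun i => ((a i : ZMod m.natAbs)), ?_⟩
    have hφa : φ a = x := b.equivFun.symm_apply_apply x
    have hdvd : ∀ i : ι, ∃ k : ℤ, (((a i : ZMod m.natAbs)).val : ℤ) - a i = m * k := by
      intro i
      have hz : (((((a i : ZMod m.natAbs)).val : ℤ) - a i : ℤ) : ZMod m.natAbs) = 0 := by
        push_cast
        rw [ZMod.natCast_val, ZMod.cast_id]
        ring
      have := (ZMod.intCast_zmod_eq_zero_iff_dvd _ _).mp hz
      rw [Int.natCast_natAbs, abs_dvd] at this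
      exact this
    choose k hk using hdvd
    show Submodule.mkQ N _ = Submodule.mkQ N x
    rw [← sub_eq_zero, ← map_sub, Submodule.mkQ_apply, Submodule.Quotient.mk_eq_zero]
    have key : φ (fun i => ((((a i : ZMod m.natAbs)).val : ℤ))) - x
        = LinearMap.lsmul ℤ M m (φ k) := by
      rw [← hφa, ← map_sub, LinearMap.lsmul_apply, ← φ.map_smul]
      congr 1
      funext i
      simp only [Pi.sub_apply, Pi.smul_apply, smul_eq_mul]
      exact hk i
    rw [key]
    exact LinearMap.mem_range_self _ _
  constructor
  · exact Finite.of_surjective g hsurj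
  · calc Nat.card (M ⧸ N) ≤ Nat.card (ι → ZMod m.natAbs) := Nat.card_le_card_of_surjective g hsurj
      _ = m.natAbs ^ (finrank ℤ M) := by
        rw [Nat.card_eq_fintype_card, Fintype.card_pi]
        simp [ZMod.card, Module.finrank_eq_card_chooseBasisIndex ℤ M]
        exact congrArg _ (Fintype.card_congr (Equiv.refl _))

/-- A ℤ-module all of whose finitely generated submodules are finite with uniformly bounded
cardinality is finite. -/
private lemma aux_finite_of_bounded_spans {Q : Type*} [AddCommGroup Q] [Module ℤ Q] (B : ℕ)
    (h : ∀ s : Finset Q, Finite (span ℤ (s : Set Q)) ∧ Nat.card (span ℤ (s : Set Q)) ≤ B) :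
    Finite Q := by
  classical
  set S : Set ℕ := Set.range (fun s : Finset Q => Nat.card (span ℤ (s : Set Q))) with hS
  have hSne : S.Nonempty := ⟨_, ⟨(∅ : Finset Q), rfl⟩⟩
  have hSbdd : BddAbove S := ⟨B, by rintro _ ⟨s, rfl⟩; exact (h s).2⟩
  obtain ⟨s₀, hs₀⟩ := Nat.sSup_mem hSne hSbdd
  have htop : (span ℤ ((s₀ : Set Q))) = ⊤ := by
    by_contra hne
    obtain ⟨x, -, hx⟩ := SetLike.exists_of_lt (lt_top_iff_ne_top.mpr hne : span ℤ (s₀ : Set Q) < ⊤)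
    set s₁ : Finset Q := insert x s₀ with hs₁
    have hle : span ℤ (s₀ : Set Q) < span ℤ (s₁ : Set Q) := by
      refine lt_of_le_of_ne (span_mono (by simp [hs₁, Finset.coe_insert, Set.subset_insert])) ?_
      intro heq
      exact hx (heq ▸ subset_span (by simp [hs₁]))
    have hcard : Nat.card (span ℤ (s₀ : Set Q)) < Nat.card (span ℤ (s₁ : Set Q)) := by
      have h1 : (span ℤ (s₀ : Set Q) : Set Q) ⊂ (span ℤ (s₁ : Set Q) : Set Q) :=
        SetLike.coe_ssubset_coe.mpr hle
      have hfin : (span ℤ (s₁ : Set Q) : Set Q).Finite := by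
        have := (h s₁).1; exact Set.toFinite _
      have h2 : ((span ℤ (s₀ : Set Q) : Set Q)).ncard < ((span ℤ (s₁ : Set Q) : Set Q)).ncard :=
        Set.ncard_lt_ncard h1 hfin
      rw [← Nat.card_coe_set_eq, ← Nat.card_coe_set_eq] at h2
      exact h2
    have hle2 : Nat.card (span ℤ (s₁ : Set Q)) ≤ sSup S := le_csSup hSbdd ⟨s₁, rfl⟩
    have hs₀' : Nat.card (span ℤ (s₀ : Set Q)) = sSup S := hs₀
    omega
  have : Finite (span ℤ ((s₀ : Set Q))) := (h s₀).1
  rw [htop] at this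
  exact Finite.of_surjective (fun y : (⊤ : Submodule ℤ Q) => (y : Q)) (fun q => ⟨⟨q, trivial⟩, rfl⟩)

variable {K : Type*} [Field K] [NumberField K] {R : Subring K}

/-- Any nonzero ideal of a subring of a number field contains a nonzero integer. -/
private lemma aux_int_mem {I : Ideal ↥R} {x : ↥R} (hx : x ≠ 0) (hxI : x ∈ I) :
    ∃ m : ℤ, m ≠ 0 ∧ (m : ↥R) ∈ I := by
  have halg : IsAlgebraic ℤ (x : K) :=
    (IsFractionRing.isAlgebraic_iff ℤ ℚ K).mpr (Algebra.IsAlgebraic.isAlgebraic _)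
  obtain ⟨p, hp, hpx⟩ := halg
  have hpR : aeval x p = 0 := by
    have hinj : Function.Injective (algebraMap ↥R K) := Subtype.val_injective
    apply hinj
    rw [← Polynomial.aeval_algebraMap_apply, map_zero]
    exact hpx
  obtain ⟨q, hq0, hqx⟩ := aux_strip x hx p.natDegree p le_rfl hp hpR
  refine ⟨q.coeff 0, hq0, ?_⟩
  have key : (q.coeff 0 : ↥R) = - (aeval x q.divX * x) := by
    have h1 := Polynomial.divX_mul_X_add q
    have h2 : aeval x (q.divX * X + C (q.coeff 0)) = 0 := by rw [h1]; exact hqx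
    simp only [map_add, map_mul, aeval_X, aeval_C] at h2
    have h3 : (q.coeff 0 : ↥R) = algebraMap ℤ ↥R (q.coeff 0) := by
      simp [algebraMap_int_eq, eq_intCast]
    rw [h3]
    linear_combination h2
  rw [key]
  exact I.neg_mem (I.mul_mem_left _ hxI)

/-- Finitely generated submodules of `R ⧸ (m)` are finite, of cardinality at most
`|m| ^ [K : ℚ]`. -/
private lemma aux_span_bound (m : ℤ) (hm : m ≠ 0)
    (s : Finset (↥R ⧸ Ideal.span {(m : ↥R)})) :
    Finite (span ℤ (s : Set (↥R ⧸ Ideal.span {(m : ↥R)}))) ∧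
      Nat.card (span ℤ (s : Set (↥R ⧸ Ideal.span {(m : ↥R)})))
        ≤ m.natAbs ^ (finrank ℚ K) := by
  classical
  let π : ↥R →ₗ[ℤ] (↥R ⧸ Ideal.span {(m : ↥R)}) :=
    (Ideal.Quotient.mk (Ideal.span {(m : ↥R)})).toIntAlgHom.toLinearMap
  have hπs : Function.Surjective π := Ideal.Quotient.mk_surjective
  let t : (↥R ⧸ Ideal.span {(m : ↥R)}) → ↥R := Function.surjInv hπs
  have ht : ∀ q, π (t q) = q := Function.surjInv_eq hπs
  set N₀ : Submodule ℤ ↥R := span ℤ (t '' (s : Set (↥R ⧸ Ideal.span {(m : ↥R)}))) with hN₀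
  haveI : Module.Finite ℤ ↥N₀ :=
    Module.Finite.span_of_finite ℤ ((s : Set (↥R ⧸ Ideal.span {(m : ↥R)})).toFinite.image t)
  haveI : Module.Free ℤ ↥N₀ := inferInstance
  have hrank : finrank ℤ ↥N₀ ≤ finrank ℚ K := by
    let b := Module.Free.chooseBasis ℤ ↥N₀
    let f : ↥N₀ →ₗ[ℤ] K := ((algebraMap ↥R K).toIntAlgHom.toLinearMap).comp N₀.subtype
    have hf : Function.Injective f := fun a b hab => Subtype.ext (Subtype.ext hab)
    have hli : LinearIndependent ℤ (f ∘ b) := b.linearIndependent.map' f (by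
      rwa [LinearMap.ker_eq_bot])
    have hli' : LinearIndependent ℚ (f ∘ b) :=
      (LinearIndependent.iff_fractionRing (R := ℤ) (K := ℚ)).mp hli
    have := hli'.fintype_card_le_finrank
    rwa [← Module.finrank_eq_card_chooseBasisIndex ℤ ↥N₀] at this
  let f' : ↥N₀ →ₗ[ℤ] (↥R ⧸ Ideal.span {(m : ↥R)}) := π.comp N₀.subtype
  have hrange : LinearMap.range f' = span ℤ (s : Set (↥R ⧸ Ideal.span {(m : ↥R)})) := by
    rw [LinearMap.range_comp, Submodule.range_subtype, hN₀, Submodule.map_span]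
    congr 1
    ext q
    constructor
    · rintro ⟨_, ⟨x, hx, rfl⟩, rfl⟩
      rw [ht x]; exact hx
    · intro hq
      exact ⟨t q, ⟨q, hq, rfl⟩, ht q⟩
  set W : Submodule ℤ ↥N₀ := LinearMap.range (LinearMap.lsmul ℤ ↥N₀ m) with hW
  have hker : W ≤ LinearMap.ker f' := by
    rintro _ ⟨y, rfl⟩
    rw [LinearMap.mem_ker, LinearMap.lsmul_apply, map_smul]
    have h2 : m • f' y = π (m • (y : ↥R)) := (π.map_smul m _).symm
    rw [h2]
    show Ideal.Quotient.mk (Ideal.span {(m : ↥R)}) (m • (y : ↥R)) = 0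
    rw [Ideal.Quotient.eq_zero_iff_mem]
    have h3 : (m • ((y : ↥R)) : ↥R) = (m : ↥R) * (y : ↥R) := by
      simp [zsmul_eq_mul]
    rw [h3]
    exact Ideal.mul_mem_right _ _ (Ideal.subset_span rfl)
  obtain ⟨hfin1, hcard1⟩ := aux_quot_smul_card (M := ↥N₀) m hm
  let ψ : (↥N₀ ⧸ W) →ₗ[ℤ] (↥R ⧸ Ideal.span {(m : ↥R)}) := W.liftQ f' hker
  have hψ : LinearMap.range ψ = LinearMap.range f' := Submodule.range_liftQ _ _ _
  let g : (↥N₀ ⧸ W) → (LinearMap.range f') := fun x => ⟨ψ x, by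
    rw [← hψ]; exact LinearMap.mem_range_self _ _⟩
  have hg : Function.Surjective g := by
    rintro ⟨q, hq⟩
    rw [← hψ] at hq
    obtain ⟨x, hx⟩ := hq
    exact ⟨x, Subtype.ext hx⟩
  constructor
  · rw [← hrange]
    exact Finite.of_surjective g hg
  · rw [← hrange]
    calc Nat.card (LinearMap.range f') ≤ Nat.card (↥N₀ ⧸ W) :=
          Nat.card_le_card_of_surjective g hg
      _ ≤ m.natAbs ^ (finrank ℤ ↥N₀) := hcard1
      _ ≤ m.natAbs ^ (finrank ℚ K) := Nat.pow_le_pow_right (by omega) hrank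

/-- Quotients of a subring of a number field by nonzero ideals are finite. -/
private lemma aux_finite_quot {J : Ideal ↥R} (hJ : J ≠ ⊥) : Finite (↥R ⧸ J) := by
  obtain ⟨x, hxJ, hx⟩ := Submodule.exists_mem_ne_zero_of_ne_bot hJ
  obtain ⟨m, hm, hmJ⟩ := aux_int_mem hx hxJ
  have hle : Ideal.span {(m : ↥R)} ≤ J := by
    rw [Ideal.span_le, Set.singleton_subset_iff]; exact hmJ
  haveI : Finite (↥R ⧸ Ideal.span {(m : ↥R)}) :=
    aux_finite_of_bounded_spans (m.natAbs ^ (finrank ℚ K)) (aux_span_bound m hm)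
  refine Finite.of_surjective (Ideal.Quotient.factor hle) (fun y => ?_)
  obtain ⟨a, rfl⟩ := Ideal.Quotient.mk_surjective y
  exact ⟨Ideal.Quotient.mk _ a, Ideal.Quotient.factor_mk hle a⟩

/-- A subring of a number field is Noetherian. -/
private lemma aux_noetherian : IsNoetherianRing ↥R := by
  rw [isNoetherianRing_iff, isNoetherian_def]
  intro I
  by_cases hI : I = ⊥
  · rw [hI]; exact Submodule.fg_bot
  obtain ⟨x, hxI, hx⟩ := Submodule.exists_mem_ne_zero_of_ne_bot hI
  obtain ⟨m, hm, hmI⟩ := aux_int_mem hx hxI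
  have hle : Ideal.span {(m : ↥R)} ≤ I := by
    rw [Ideal.span_le, Set.singleton_subset_iff]; exact hmI
  haveI hfin : Finite (↥R ⧸ Ideal.span {(m : ↥R)}) :=
    aux_finite_of_bounded_spans (m.natAbs ^ (finrank ℚ K)) (aux_span_bound m hm)
  -- I is f.g. since its image mod (m) is f.g. and (m) is f.g.
  refine Submodule.fg_of_fg_map_of_fg_inf_ker (Ideal.span {(m : ↥R)}).mkQ ?_ ?_
  · exact Submodule.fg_def.mpr ⟨_, Set.toFinite _,
      Submodule.span_eq (Submodule.map (Ideal.span {(m : ↥R)}).mkQ I)⟩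
  · rw [Submodule.ker_mkQ, inf_eq_right.mpr hle]
    exact ⟨{(m : ↥R)}, by simp⟩

end Aux


/-- In a commutative ring with finite quotients by a maximal ideal `P` and its square,
the inequality `|A/P²| ≤ |A/P|²` forces `P` to be principal modulo `P²`. -/
private lemma aux_generator {A : Type*} [CommRing A] (P : Ideal A) (hPm : P.IsMaximal)
    [hfinP : Finite (A ⧸ P)] [hfinP2 : Finite (A ⧸ P ^ 2)]
    (hcard : Nat.card (A ⧸ P ^ 2) ≤ (Nat.card (A ⧸ P)) ^ 2) :
    ∃ x ∈ P, P ≤ Ideal.span {x} ⊔ P ^ 2 := by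
  classical
  set mk2 := Ideal.Quotient.mk (P ^ 2) with hmk2
  set V : Ideal (A ⧸ P ^ 2) := P.map mk2 with hV
  have hq2 : 2 ≤ Nat.card (A ⧸ P) := by
    haveI : Nontrivial (A ⧸ P) := Ideal.Quotient.nontrivial_iff.mpr hPm.ne_top
    have := Finite.one_lt_card_iff_nontrivial.mpr (inferInstance : Nontrivial (A ⧸ P))
    omega
  -- the exact sequence counting
  have hcount : Nat.card (A ⧸ P ^ 2) = Nat.card V * Nat.card (A ⧸ P) := by
    rw [Submodule.card_eq_card_quotient_mul_card (V : Ideal (A ⧸ P ^ 2))]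
    congr 1
    exact Nat.card_congr (DoubleQuot.quotQuotEquivQuotOfLE
      (Ideal.pow_le_self (two_ne_zero))).toEquiv
  have hVle : Nat.card V ≤ Nat.card (A ⧸ P) := by
    rw [hcount] at hcard
    exact Nat.le_of_mul_le_mul_right (hcard.trans_eq (pow_two _)) (by omega)
  by_cases hVbot : V = ⊥
  · refine ⟨0, P.zero_mem, fun y hy => ?_⟩
    have : mk2 y ∈ V := Ideal.mem_map_of_mem mk2 hy
    rw [hVbot, Ideal.mem_bot, hmk2, Ideal.Quotient.eq_zero_iff_mem] at this
    exact Submodule.mem_sup_right this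
  · obtain ⟨v, hvV, hv⟩ := Submodule.exists_mem_ne_zero_of_ne_bot hVbot
    obtain ⟨x, hxP, hvx⟩ :=
      (Ideal.mem_map_iff_of_surjective mk2 Ideal.Quotient.mk_surjective).mp hvV
    set μ : A →ₗ[A] (A ⧸ P ^ 2) := LinearMap.toSpanSingleton A (A ⧸ P ^ 2) v with hμ
    have hsmul : ∀ c : A, c • v = mk2 (c * x) := by
      intro c
      rw [← hvx]
      rw [← smul_eq_mul]
      exact (Submodule.Quotient.mk_smul _ c x).symm
    have hkerP : LinearMap.ker μ = P := by
      refine (hPm.eq_of_le (fun htop => ?_) (fun c hc => ?_)).symm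
      · have h1 : (1 : A) ∈ LinearMap.ker μ := htop ▸ Submodule.mem_top
        rw [LinearMap.mem_ker, hμ, LinearMap.toSpanSingleton_apply, one_smul] at h1
        exact hv h1
      · rw [LinearMap.mem_ker, hμ, LinearMap.toSpanSingleton_apply, hsmul c,
          hmk2, Ideal.Quotient.eq_zero_iff_mem, pow_two]
        exact Ideal.mul_mem_mul hc hxP
    have hcardS : Nat.card (LinearMap.range μ) = Nat.card (A ⧸ P) := by
      have e : Nat.card (A ⧸ LinearMap.ker μ) = Nat.card (LinearMap.range μ) :=
        Nat.card_congr (LinearMap.quotKerEquivRange μ).toEquiv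
      rw [hkerP] at e
      exact e.symm
    have hSV : (LinearMap.range μ : Set (A ⧸ P ^ 2)) = (V : Set (A ⧸ P ^ 2)) := by
      refine Set.eq_of_subset_of_ncard_le ?_ ?_ (Set.toFinite _)
      · rintro _ ⟨c, rfl⟩
        rw [hμ, LinearMap.toSpanSingleton_apply]
        exact V.smul_of_tower_mem c hvV
      · rw [← Nat.card_coe_set_eq, ← Nat.card_coe_set_eq]
        show Nat.card V ≤ Nat.card (LinearMap.range μ)
        rw [hcardS]
        exact hVle
    refine ⟨x, hxP, fun y hy => ?_⟩
    have hyV : mk2 y ∈ (LinearMap.range μ : Set (A ⧸ P ^ 2)) := by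
      rw [hSV]; exact Ideal.mem_map_of_mem mk2 hy
    obtain ⟨c, hc⟩ := hyV
    rw [hμ, LinearMap.toSpanSingleton_apply, hsmul c] at hc
    have hy2 : y - c * x ∈ P ^ 2 := by
      rw [← Ideal.Quotient.eq_zero_iff_mem, map_sub, hc, sub_self]
    have : y = c * x + (y - c * x) := by ring
    rw [this]
    exact Submodule.add_mem_sup
      (Ideal.mul_mem_left _ c (Ideal.subset_span rfl)) hy2

/-- A number ring (not a field) in which `N(𝔭²) ≤ N(𝔭)²` for every maximal ideal `𝔭`
is a Dedekind domain. -/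
theorem stmt5 (K : Type*) [Field K] [NumberField K] (R : Subring K)
    (hnf : ¬ IsField ↥R)
    (h : ∀ 𝔭 : Ideal ↥R, 𝔭.IsMaximal →
      Nat.card (↥R ⧸ 𝔭 ^ 2) ≤ (Nat.card (↥R ⧸ 𝔭)) ^ 2) :
    IsDedekindDomain ↥R := by
  haveI hnoeth : IsNoetherianRing ↥R := aux_noetherian
  -- every nonzero prime is maximal
  have hmax : ∀ P : Ideal ↥R, P ≠ ⊥ → P.IsPrime → P.IsMaximal := by
    intro P hP hPp
    haveI := hPp
    haveI : Finite (↥R ⧸ P) := aux_finite_quot hP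
    exact Ideal.Quotient.maximal_of_isField _ (Finite.isField_of_domain _)
  -- it suffices to see localizations at nonzero primes are DVRs
  haveI : IsDedekindDomainDvr ↥R := by
    refine ⟨fun P hP hPp => ?_⟩
    haveI := hPp
    haveI hPm : P.IsMaximal := hmax P hP hPp
    -- the square is nonzero
    have hP2 : P ^ 2 ≠ ⊥ := by
      intro hbot
      obtain ⟨x, hxP, hx⟩ := Submodule.exists_mem_ne_zero_of_ne_bot hP
      have : x * x ∈ P ^ 2 := by rw [pow_two]; exact Ideal.mul_mem_mul hxP hxP
      rw [hbot, Ideal.mem_bot, mul_self_eq_zero] at this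
      exact hx this
    haveI hfinP : Finite (↥R ⧸ P) := aux_finite_quot hP
    haveI hfinP2 : Finite (↥R ⧸ P ^ 2) := aux_finite_quot hP2
    -- find x ∈ P generating P modulo P²
    obtain ⟨x, hxP, hgen⟩ : ∃ x ∈ P, P ≤ Ideal.span {x} ⊔ P ^ 2 :=
      aux_generator P hPm (h P hPm)
    -- transfer to the localization
    set Rₚ := Localization.AtPrime P with hRₚ
    haveI : IsNoetherianRing Rₚ := IsLocalization.isNoetherianRing P.primeCompl Rₚ hnoeth
    have hnf' : ¬ IsField Rₚ := IsLocalization.AtPrime.not_isField ↥R hP Rₚ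
    have hmain : (IsLocalRing.maximalIdeal Rₚ).IsPrincipal := by
      set φ := algebraMap ↥R Rₚ with hφ
      have hmapeq : Ideal.map φ P = IsLocalRing.maximalIdeal Rₚ :=
        Localization.AtPrime.map_eq_maximalIdeal
      have h1 : Ideal.map φ P ≤ Ideal.span {φ x} ⊔ (Ideal.map φ P) ^ 2 := by
        calc Ideal.map φ P ≤ Ideal.map φ (Ideal.span {x} ⊔ P ^ 2) := Ideal.map_mono hgen
          _ = Ideal.span {φ x} ⊔ (Ideal.map φ P) ^ 2 := by
              rw [Ideal.map_sup, Ideal.map_pow, Ideal.map_span, Set.image_singleton]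
      have h2 : IsLocalRing.maximalIdeal Rₚ
          ≤ Ideal.span {φ x} ⊔ (IsLocalRing.maximalIdeal Rₚ) • (IsLocalRing.maximalIdeal Rₚ) := by
        rw [← hmapeq]
        calc Ideal.map φ P ≤ Ideal.span {φ x} ⊔ (Ideal.map φ P) ^ 2 := h1
          _ = Ideal.span {φ x} ⊔ (Ideal.map φ P) • (Ideal.map φ P) := by
              rw [smul_eq_mul, pow_two]
      have h3 : IsLocalRing.maximalIdeal Rₚ ≤ Ideal.span {φ x} :=
        Submodule.le_of_le_smul_of_le_jacobson_bot (IsNoetherian.noetherian _)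
          (by rw [IsLocalRing.jacobson_eq_maximalIdeal ⊥ bot_ne_top]) h2
      have h4 : Ideal.span {φ x} ≤ IsLocalRing.maximalIdeal Rₚ := by
        rw [Ideal.span_le, Set.singleton_subset_iff, ← hmapeq]
        exact Ideal.mem_map_of_mem φ hxP
      exact ⟨φ x, le_antisymm h3 h4⟩
    exact ((IsDiscreteValuationRing.TFAE Rₚ hnf').out 0 4).mpr hmain
  exact IsDedekindDomainDvr.isDedekindDomain ↥R
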